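/- arXiv:1904.11729 — 16 statements merged into one kernel-verified Lean document; each statement's English description precedes it below -/
import Mathlib

section
/- Every cyclic semimodule over a commutative semiring is a multiplication semimodule. -/
/-- Every cyclic semimodule over a commutative semiring is a multiplication semimodule. -/
theorem cyclic_is_multiplication {S M : Type*} [CommSemiring S] [AddCommMonoid M]
    [Module S M] (m : M) (hcyc : (⊤ : Submodule S M) = Submodule.span S {m}) :
    ∀ N : Submodule S M, ∃ I : Ideal S, N = I • (⊤ : Submodule S M) := by
  intro N
  refine ⟨N.comap (LinearMap.toSpanSingleton S M m), le_antisymm ?_ ?_⟩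
  · intro n hn
    have hm : n ∈ Submodule.span S {m} := hcyc ▸ Submodule.mem_top
    obtain ⟨s, hs⟩ := Submodule.mem_span_singleton.mp hm
    have hsI : s ∈ N.comap (LinearMap.toSpanSingleton S M m) := by
      simpa [LinearMap.toSpanSingleton_apply, hs] using hn
    simpa [hs] using Submodule.smul_mem_smul hsI (Submodule.mem_top (x := m))
  · rw [Submodule.smul_le]
    intro s hs x hx
    have hxm : x ∈ Submodule.span S {m} := hcyc ▸ hx
    obtain ⟨t, ht⟩ := Submodule.mem_span_singleton.mp hxm
    have : s • x = t • (s • m) := by rw [← ht, smul_smul, smul_smul, mul_comm]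
    rw [this]
    exact N.smul_mem t hs
end

section
/- If f : M → N is a surjective homomorphism of S-semimodules and M is a multiplication S-semimodule, then N is a multiplication S-semimodule. -/
/-- A surjective homomorphic image of a multiplication semimodule is a
multiplication semimodule. -/
theorem multiplication_of_surjective {S M N : Type*} [CommSemiring S]
    [AddCommMonoid M] [Module S M] [AddCommMonoid N] [Module S N]
    (f : M →ₗ[S] N) (hf : Function.Surjective f)
    (hM : ∀ P : Submodule S M, ∃ I : Ideal S, P = I • (⊤ : Submodule S M)) :
    ∀ Q : Submodule S N, ∃ I : Ideal S, Q = I • (⊤ : Submodule S N) := by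
  intro Q
  obtain ⟨I, hI⟩ := hM (Q.comap f)
  refine ⟨I, ?_⟩
  have h1 : Q = (Q.comap f).map f := (Submodule.map_comap_eq_of_surjective hf Q).symm
  rw [h1, hI, Submodule.map_smul'', Submodule.map_top, LinearMap.range_eq_top.mpr hf]
end

section
/- If M is a multiplication S-semimodule, then for every maximal ideal p of S, either M = {m ∈ M : m = qm for some q ∈ p} or M is p-cyclic. -/
/-- If M is a multiplication semimodule, then for every maximal ideal p of S,
either M = {m : m = qm for some q ∈ p} or M is p-cyclic. -/
theorem pcyclic_or_eq_of_multiplication {S M : Type*} [CommSemiring S]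
    [AddCommMonoid M] [Module S M]
    (hM : ∀ N : Submodule S M, ∃ I : Ideal S, N = I • (⊤ : Submodule S M)) :
    ∀ p : Ideal S, p.IsMaximal →
      (∀ m : M, ∃ q ∈ p, m = q • m) ∨
      (∃ m : M, ∃ t : S, ∃ q ∈ p, t + q = 1 ∧
        ∀ x : M, t • x ∈ Submodule.span S {m}) := by
  intro p hp
  by_cases h : ∃ (m : M) (I : Ideal S),
      Submodule.span S {m} = I • (⊤ : Submodule S M) ∧ ¬ I ≤ p
  · right
    obtain ⟨m, I, hI, hIp⟩ := h
    obtain ⟨b, hbI, hbp⟩ := SetLike.not_le_iff_exists.mp hIp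
    have hsup : p ⊔ Ideal.span {b} = ⊤ := by
      refine hp.out.2 _ (lt_of_le_of_ne le_sup_left ?_)
      intro hcontra
      exact hbp (hcontra ▸ (le_sup_right (a := p))
        (Ideal.subset_span (Set.mem_singleton b)))
    have h1 : (1 : S) ∈ p ⊔ Ideal.span {b} := by
      rw [hsup]; exact Submodule.mem_top
    obtain ⟨q, hq, c, hc, hqc⟩ := Submodule.mem_sup.mp h1
    obtain ⟨a, ha⟩ := Ideal.mem_span_singleton'.mp hc
    refine ⟨m, c, q, hq, by rw [add_comm]; exact hqc, fun x => ?_⟩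
    have hbx : b • x ∈ Submodule.span S {m} := by
      rw [hI]
      exact Submodule.smul_mem_smul hbI Submodule.mem_top
    have : c • x = a • (b • x) := by rw [← ha, mul_smul]
    rw [this]
    exact Submodule.smul_mem _ a hbx
  · left
    push_neg at h
    intro m
    obtain ⟨I, hI⟩ := hM (Submodule.span S {m})
    have hm : m ∈ I • (⊤ : Submodule S M) :=
      hI ▸ Submodule.mem_span_singleton_self m
    refine Submodule.smul_induction_on (p := fun y => ∃ q ∈ p, y = q • m) hm ?_ ?_
    · intro r hr x _
      obtain ⟨J, hJ⟩ := hM (Submodule.span S {x})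
      have hJp : J ≤ p := h x J hJ
      have hx : x ∈ J • (⊤ : Submodule S M) :=
        hJ ▸ Submodule.mem_span_singleton_self x
      have key : ∀ z ∈ J • (⊤ : Submodule S M), ∃ q ∈ p, r • z = q • m := by
        intro z hz
        refine Submodule.smul_induction_on (p := fun z => ∃ q ∈ p, r • z = q • m)
          hz ?_ ?_
        · intro b hb y _
          have hry : r • y ∈ Submodule.span S {m} := by
            rw [hI]
            exact Submodule.smul_mem_smul hr Submodule.mem_top
          obtain ⟨s, hs⟩ := Submodule.mem_span_singleton.mp hry
          refine ⟨b * s, Ideal.mul_mem_right s p (hJp hb), ?_⟩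
          rw [smul_comm r b y, ← hs, ← mul_smul]
        · rintro y z ⟨q₁, hq₁, hy⟩ ⟨q₂, hq₂, hz⟩
          exact ⟨q₁ + q₂, p.add_mem hq₁ hq₂, by rw [smul_add, hy, hz, add_smul]⟩
      exact key x hx
    · rintro y z ⟨q₁, hq₁, hy⟩ ⟨q₂, hq₂, hz⟩
      exact ⟨q₁ + q₂, p.add_mem hq₁ hq₂, by rw [hy, hz, add_smul]⟩
end

section
/- If (S, m) is a local commutative semiring and M is a multiplication S-semimodule with M ≠ mM, then M is cyclic. -/
/-- Over a local semiring (S, m), a multiplication semimodule M with M ≠ mM is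
cyclic. -/
theorem cyclic_of_local_multiplication {S M : Type*} [CommSemiring S]
    [AddCommMonoid M] [Module S M] (m : Ideal S) (hm : m.IsMaximal)
    (hloc : ∀ p : Ideal S, p.IsMaximal → p = m)
    (hM : ∀ N : Submodule S M, ∃ I : Ideal S, N = I • (⊤ : Submodule S M))
    (hne : m • (⊤ : Submodule S M) ≠ ⊤) :
    ∃ n : M, (⊤ : Submodule S M) = Submodule.span S {n} := by
  have hx : ∃ x : M, x ∉ m • (⊤ : Submodule S M) := by
    by_contra h
    push_neg at h
    exact hne (eq_top_iff.mpr fun y _ => h y)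
  obtain ⟨x, hx⟩ := hx
  obtain ⟨I, hI⟩ := hM (Submodule.span S {x})
  have hIm : ¬ I ≤ m := fun hle => hx (by
    have : Submodule.span S {x} ≤ m • ⊤ := hI ▸ Submodule.smul_mono hle le_rfl
    exact this (Submodule.mem_span_singleton_self x))
  have hItop : I = ⊤ := by
    by_contra h
    obtain ⟨p, hp, hIp⟩ := Ideal.exists_le_maximal I h
    exact hIm (hloc p hp ▸ hIp)
  exact ⟨x, (hI.trans (by rw [hItop, Submodule.top_smul])).symm⟩
end

section
/- Let S be a yoked entire commutative semiring and M a cancellative faithful multiplication S-semimodule. Then M is multiplicatively cancellative: for all s, s' ∈ S and nonzero m ∈ M, sm = s'm implies s = s'. -/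
/-- Over a yoked entire semiring, a cancellative faithful multiplication
semimodule is multiplicatively cancellative. -/
theorem MC_of_cancellative_faithful_multiplication {S M : Type*} [CommSemiring S]
    [AddCommMonoid M] [Module S M]
    (hyoked : ∀ a b : S, ∃ t : S, a + t = b ∨ b + t = a)
    (hentire : ∀ a b : S, a * b = 0 → a = 0 ∨ b = 0)
    (hcanc : ∀ m m1 m2 : M, m + m1 = m + m2 → m1 = m2)
    (hfaith : ∀ t : S, (∀ x : M, t • x = 0) → t = 0)
    (hM : ∀ N : Submodule S M, ∃ I : Ideal S, N = I • (⊤ : Submodule S M)) :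
    ∀ (s s' : S) (m : M), m ≠ 0 → s • m = s' • m → s = s' := by
  have key : ∀ (t : S) (m : M), m ≠ 0 → t • m = 0 → t = 0 := by
    intro t m hm htm
    by_contra ht
    obtain ⟨I, hI⟩ := hM (Submodule.span S {m})
    have hI0 : ∀ a ∈ I, a = 0 := by
      intro a ha
      have h1 : a * t = 0 := by
        apply hfaith
        intro x
        have hax : a • x ∈ Submodule.span S {m} := by
          rw [hI]; exact Submodule.smul_mem_smul ha Submodule.mem_top
        obtain ⟨c, hc⟩ := Submodule.mem_span_singleton.1 hax
        calc (a * t) • x = t • (a • x) := by rw [mul_comm, mul_smul]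
          _ = t • (c • m) := by rw [hc]
          _ = c • (t • m) := smul_comm _ _ _
          _ = 0 := by rw [htm, smul_zero]
      rcases hentire a t h1 with h | h
      · exact h
      · exact absurd h ht
    have hm0 : m = 0 := by
      have hm' : m ∈ Submodule.span S {m} := Submodule.mem_span_singleton_self m
      rw [hI] at hm'
      have hle : I • (⊤ : Submodule S M) ≤ ⊥ := by
        rw [Submodule.smul_le]
        intro r hr n _
        rw [hI0 r hr, zero_smul]; exact Submodule.zero_mem _
      exact (Submodule.mem_bot S).1 (hle hm')
    exact hm hm0
  intro s s' m hm h
  obtain ⟨t, ht | ht⟩ := hyoked s s'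
  · have h2 : s • m + t • m = s • m + 0 := by
      rw [add_zero, ← add_smul, ht, h]
    have := key t m hm (hcanc _ _ _ h2)
    rw [← ht, this, add_zero]
  · have h2 : s' • m + t • m = s' • m + 0 := by
      rw [add_zero, ← add_smul, ht, ← h]
    have := key t m hm (hcanc _ _ _ h2)
    rw [← ht, this, add_zero]
end

section
/- Let S be a yoked semidomain and M a cancellative torsionfree S-semimodule. Then M is multiplicatively cancellative: sm = s'm with m ≠ 0 implies s = s'. -/
/-- Over a yoked semidomain, a cancellative torsionfree semimodule is
multiplicatively cancellative. -/
theorem MC_of_cancellative_torsionfree {S M : Type*} [CommSemiring S]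
    [AddCommMonoid M] [Module S M]
    (hyoked : ∀ a b : S, ∃ t : S, a + t = b ∨ b + t = a)
    (hdom : ∀ a : S, a ≠ 0 → ∀ b c : S, a * b = a * c → b = c)
    (hcanc : ∀ m m1 m2 : M, m + m1 = m + m2 → m1 = m2)
    (htf : ∀ a : S, a ≠ 0 → ∀ x y : M, a • x = a • y → x = y) :
    ∀ (s s' : S) (m : M), m ≠ 0 → s • m = s' • m → s = s' := by
  have key : ∀ (s t : S) (m : M), m ≠ 0 → s • m = (s + t) • m → t = 0 := by
    intro s t m hm h
    rw [add_smul] at h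
    have h0 : t • m = 0 := hcanc (s • m) (t • m) 0 (by rw [add_zero, ← h])
    by_contra ht
    exact hm (htf t ht m 0 (by rw [smul_zero, h0]))
  intro s s' m hm h
  obtain ⟨t, ht | ht⟩ := hyoked s s'
  · have := key s t m hm (by rw [ht, h])
    rw [← ht, this, add_zero]
  · have := key s' t m hm (by rw [ht, h])
    rw [← ht, this, add_zero]
end

section
/- Let p be a prime ideal of S and M a multiplicatively cancellative multiplication S-semimodule. If a ∈ S and x ∈ M satisfy ax ∈ pM, then a ∈ p or x ∈ pM. -/
/-- Let p be a prime ideal and M an MC multiplication semimodule. If ax ∈ pM,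
then a ∈ p or x ∈ pM. -/
theorem mem_prime_or_mem_smul {S M : Type*} [CommSemiring S]
    [AddCommMonoid M] [Module S M] (p : Ideal S) (hp : p.IsPrime)
    (hMC : ∀ (s s' : S) (m : M), m ≠ 0 → s • m = s' • m → s = s')
    (hM : ∀ N : Submodule S M, ∃ I : Ideal S, N = I • (⊤ : Submodule S M))
    (a : S) (x : M) (hax : a • x ∈ p • (⊤ : Submodule S M)) :
    a ∈ p ∨ x ∈ p • (⊤ : Submodule S M) := by
  by_cases ha : a ∈ p
  · exact Or.inl ha
  right
  by_cases hx0 : x = 0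
  · simp only [hx0]; exact (p • (⊤ : Submodule S M)).zero_mem
  obtain ⟨I, hI⟩ := hM (Submodule.span S {x})
  -- every element of p • span{x} has the form t • x with t ∈ p
  have key : ∀ y ∈ p • Submodule.span S {x}, ∃ t ∈ p, y = t • x := by
    intro y hy
    refine Submodule.smul_induction_on hy ?_ ?_
    · intro s hs m hm
      obtain ⟨c, hc⟩ := Submodule.mem_span_singleton.mp hm
      exact ⟨s * c, Ideal.mul_mem_right _ _ hs, by rw [← hc, smul_smul]⟩
    · rintro y z ⟨t, ht, rfl⟩ ⟨t', ht', rfl⟩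
      exact ⟨t + t', p.add_mem ht ht', (add_smul t t' x).symm⟩
  -- I ⊆ p
  have hIp : I ≤ p := by
    intro i hi
    have h1 : i • (a • x) ∈ p • Submodule.span S {x} := by
      refine Submodule.smul_induction_on hax ?_ ?_
      · intro s hs m _
        rw [smul_comm]
        refine Submodule.smul_mem_smul hs ?_
        rw [hI]
        exact Submodule.smul_mem_smul hi trivial
      · intro y z hy hz
        rw [smul_add]
        exact Submodule.add_mem _ hy hz
    obtain ⟨t, ht, hteq⟩ := key _ h1
    rw [smul_smul] at hteq
    have : i * a = t := hMC _ _ _ hx0 hteq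
    rcases hp.mul_mem_iff_mem_or_mem.mp (this ▸ ht) with h | h
    · exact h
    · exact absurd h ha
  -- conclude
  have hx : x ∈ Submodule.span S {x} := Submodule.mem_span_singleton_self x
  rw [hI] at hx
  exact Submodule.smul_mono_left hIp hx
end

section
/- If M is a multiplication S-semimodule, then M = θ(M)M, where θ(M) = Σ_{m ∈ M} (Sm : M). -/
/-- The ideal (N : M) = {s : S | sM ⊆ N}. -/
def colonIdeal {S M : Type*} [CommSemiring S] [AddCommMonoid M] [Module S M]
    (N : Submodule S M) : Ideal S where
  carrier := {s : S | ∀ x : M, s • x ∈ N}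
  add_mem' := fun ha hb x => by rw [add_smul]; exact N.add_mem (ha x) (hb x)
  zero_mem' := fun x => by rw [zero_smul]; exact N.zero_mem
  smul_mem' := fun c a ha x => by
    rw [smul_eq_mul, mul_smul]; exact N.smul_mem c (ha x)

/-- If M is a multiplication semimodule, then M = θ(M)M where
θ(M) = Σ_{m ∈ M} (Sm : M). -/
theorem theta_smul_eq_top {S M : Type*} [CommSemiring S] [AddCommMonoid M]
    [Module S M]
    (hM : ∀ N : Submodule S M, ∃ I : Ideal S, N = I • (⊤ : Submodule S M)) :
    (⨆ m : M, colonIdeal (Submodule.span S {m})) • (⊤ : Submodule S M) = ⊤ := by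
  rw [eq_top_iff]
  intro m _
  obtain ⟨I, hI⟩ := hM (Submodule.span S {m})
  have hIle : I ≤ colonIdeal (Submodule.span S {m}) := by
    intro s hs x
    rw [hI]
    exact Submodule.smul_mem_smul hs trivial
  have hm : m ∈ I • (⊤ : Submodule S M) := by
    rw [← hI]; exact Submodule.mem_span_singleton_self m
  exact Submodule.smul_mono
    (hIle.trans (le_iSup (fun m => colonIdeal (Submodule.span S {m})) m))
    le_rfl hm
end

section
/- Every multiplicatively cancellative multiplication S-semimodule M is finitely generated. -/
open Submodule Finset

/-- Every MC multiplication semimodule is finitely generated. -/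
theorem fg_of_MC_multiplication {S M : Type*} [CommSemiring S]
    [AddCommMonoid M] [Module S M]
    (hMC : ∀ (s s' : S) (m : M), m ≠ 0 → s • m = s' • m → s = s')
    (hM : ∀ N : Submodule S M, ∃ I : Ideal S, N = I • (⊤ : Submodule S M)) :
    (⊤ : Submodule S M).FG := by
  classical
  by_cases h0 : ∀ x : M, x = 0
  · exact ⟨{0}, le_antisymm le_top (by
      intro x _
      rw [h0 x]; exact zero_mem _)⟩
  push_neg at h0
  obtain ⟨m, hm0⟩ := h0
  obtain ⟨I, hI⟩ := hM (span S {m})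
  have hc : ∀ s s' : S, s • m = s' • m → s = s' := fun s s' h => hMC s s' m hm0 h
  -- a finite representation m = ∑ v in t, a v • v with a v ∈ I
  have hmI : m ∈ I • span S (Set.range (id : M → M)) := by
    rw [Set.range_id, span_univ, ← hI]; exact mem_span_singleton_self m
  obtain ⟨fa, hfa, hfsum⟩ := (Submodule.mem_ideal_smul_span_iff_exists_sum I id m).mp hmI
  set t : Finset M := fa.support with ht
  set a : M → S := fun z => fa z with haf
  have ha : ∀ z : M, a z ∈ I := hfa
  have hsum : ∑ v ∈ t, a v • v = m := hfsum
  -- the "division by m" function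
  have key : ∀ (z : M) (s : S), ∃ rr : S, s ∈ I → s • z = rr • m := by
    intro z s
    by_cases hs : s ∈ I
    · have hz : s • z ∈ span S {m} := by
        rw [hI]; exact smul_mem_smul hs mem_top
      obtain ⟨rr, hrr⟩ := mem_span_singleton.mp hz
      exact ⟨rr, fun _ => hrr.symm⟩
    · exact ⟨0, fun h => absurd h hs⟩
  choose r hr using key
  -- R3 : a w = ∑ v, a v * r v (a w)
  have R3 : ∀ w : M, a w = ∑ v ∈ t, a v * r v (a w) := by
    intro w
    apply hc
    calc a w • m = a w • ∑ v ∈ t, a v • v := by rw [hsum]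
      _ = ∑ v ∈ t, a v • (a w • v) := by
          rw [Finset.smul_sum]
          exact Finset.sum_congr rfl fun v _ => smul_comm _ _ _
      _ = ∑ v ∈ t, a v • (r v (a w) • m) :=
          Finset.sum_congr rfl fun v _ => by rw [hr v (a w) (ha w)]
      _ = (∑ v ∈ t, a v * r v (a w)) • m := by
          rw [Finset.sum_smul]
          exact Finset.sum_congr rfl fun v _ => smul_smul _ _ _
  -- R4 : a w * r x (a v) = a v * r x (a w)
  have R4 : ∀ (x w v : M), a w * r x (a v) = a v * r x (a w) := by
    intro x w v
    apply hc
    calc (a w * r x (a v)) • m = a w • (r x (a v) • m) := (smul_smul _ _ _).symm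
      _ = a w • (a v • x) := by rw [← hr x (a v) (ha v)]
      _ = a v • (a w • x) := smul_comm _ _ _
      _ = a v • (r x (a w) • m) := by rw [hr x (a w) (ha w)]
      _ = (a v * r x (a w)) • m := smul_smul _ _ _
  -- R5 : r x (a w) = ∑ v, r x (a v) * r v (a w)
  have R5 : ∀ (x w : M), r x (a w) = ∑ v ∈ t, r x (a v) * r v (a w) := by
    intro x w
    have keyscalar : ∀ u : M, (∑ v ∈ t, r x (a v) * r v (a w)) * a u = r x (a w) * a u := by
      intro u
      rw [Finset.sum_mul]
      have h1 : ∀ v ∈ t, r x (a v) * r v (a w) * a u = r x (a u) * (a v * r v (a w)) := by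
        intro v _
        calc r x (a v) * r v (a w) * a u = (a u * r x (a v)) * r v (a w) := by ring
          _ = (a v * r x (a u)) * r v (a w) := by rw [R4 x u v]
          _ = r x (a u) * (a v * r v (a w)) := by ring
      rw [Finset.sum_congr rfl h1, ← Finset.mul_sum, ← R3 w]
      calc r x (a u) * a w = a w * r x (a u) := by ring
        _ = a u * r x (a w) := R4 x w u
        _ = r x (a w) * a u := by ring
    apply hc
    calc r x (a w) • m = r x (a w) • ∑ u ∈ t, a u • u := by rw [hsum]
      _ = ∑ u ∈ t, (r x (a w) * a u) • u := by
          rw [Finset.smul_sum]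
          exact Finset.sum_congr rfl fun u _ => smul_smul _ _ _
      _ = ∑ u ∈ t, ((∑ v ∈ t, r x (a v) * r v (a w)) * a u) • u :=
          Finset.sum_congr rfl fun u _ => by rw [keyscalar u]
      _ = (∑ v ∈ t, r x (a v) * r v (a w)) • ∑ u ∈ t, a u • u := by
          rw [Finset.smul_sum]
          exact Finset.sum_congr rfl fun u _ => (smul_smul _ _ _).symm
      _ = (∑ v ∈ t, r x (a v) * r v (a w)) • m := by rw [hsum]
  -- main pointwise relation : a w • x = a w • y
  have hxy : ∀ x w : M, a w • x = a w • (∑ v ∈ t, r x (a v) • v) := by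
    intro x w
    calc a w • x = r x (a w) • m := hr x (a w) (ha w)
      _ = (∑ v ∈ t, r x (a v) * r v (a w)) • m := by rw [← R5 x w]
      _ = ∑ v ∈ t, r x (a v) • (r v (a w) • m) := by
          rw [Finset.sum_smul]
          exact Finset.sum_congr rfl fun v _ => (smul_smul _ _ _).symm
      _ = ∑ v ∈ t, r x (a v) • (a w • v) :=
          Finset.sum_congr rfl fun v _ => by rw [← hr v (a w) (ha w)]
      _ = a w • ∑ v ∈ t, r x (a v) • v := by
          rw [Finset.smul_sum]
          exact Finset.sum_congr rfl fun v _ => (smul_comm _ _ _).symm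
  -- the ideal I₀ generated by the coefficients
  set I₀ : Ideal S := Ideal.span (a '' ↑t) with hI₀
  have hI₀le : I₀ ≤ I := Ideal.span_le.mpr (by rintro s ⟨w, hw, rfl⟩; exact ha w)
  have hI₀top : I₀ • (⊤ : Submodule S M) = span S {m} := by
    apply le_antisymm
    · refine Submodule.smul_le.mpr fun s hs n _ => ?_
      rw [hI]; exact smul_mem_smul (hI₀le hs) mem_top
    · rw [span_le]
      intro z hz
      rw [Set.mem_singleton_iff] at hz; subst hz
      rw [← hsum]
      exact sum_mem fun v hv =>
        smul_mem_smul (Ideal.subset_span ⟨v, hv, rfl⟩) mem_top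
  -- action of I₀ determined by action of the a w's
  have hEq : ∀ (u v : M), (∀ w : M, a w • u = a w • v) → ∀ s ∈ I₀, s • u = s • v := by
    intro u v huv s hs
    let E : Ideal S :=
      { carrier := {s | s • u = s • v}
        add_mem' := fun {p q} hp hq => by
          simp only [Set.mem_setOf_eq, add_smul] at *
          rw [hp, hq]
        zero_mem' := by simp
        smul_mem' := fun c p hp => by
          simp only [Set.mem_setOf_eq, smul_eq_mul, mul_smul] at *
          rw [hp] }
    have hle : I₀ ≤ E := Ideal.span_le.mpr (by rintro s ⟨w, hw, rfl⟩; exact huv w)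
    exact hle hs
  have dir : ∀ (u v : M), (∀ w : M, a w • u = a w • v) →
      I₀ • span S {u} ≤ I₀ • span S {v} := by
    intro u v huv
    refine Submodule.smul_le.mpr fun s hs n hn => ?_
    obtain ⟨c, rfl⟩ := mem_span_singleton.mp hn
    rw [smul_comm s c, hEq u v huv s hs]
    exact Submodule.smul_mem _ c (smul_mem_smul hs (mem_span_singleton_self v))
  -- chain lemma
  have hchain : ∀ (K : Ideal S) (z : M), span S {z} = K • (⊤ : Submodule S M) →
      K • span S {m} = I₀ • span S {z} := by
    intro K z hK
    calc K • span S {m} = K • (I₀ • (⊤ : Submodule S M)) := by rw [hI₀top]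
      _ = (K • I₀) • (⊤ : Submodule S M) := (Submodule.smul_assoc K I₀ ⊤).symm
      _ = (I₀ • K) • (⊤ : Submodule S M) := by
          rw [smul_eq_mul, smul_eq_mul, mul_comm]
      _ = I₀ • (K • (⊤ : Submodule S M)) := Submodule.smul_assoc _ _ _
      _ = I₀ • span S {z} := by rw [← hK]
  -- membership characterization
  have hmem : ∀ (K : Ideal S) (z : M), z ∈ K • span S {m} → ∃ k ∈ K, z = k • m := by
    intro K z hz
    refine Submodule.smul_induction_on hz ?_ ?_
    · intro s hs n hn
      obtain ⟨c, rfl⟩ := mem_span_singleton.mp hn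
      exact ⟨s * c, Ideal.mul_mem_right c _ hs, by rw [smul_smul]⟩
    · rintro n1 n2 ⟨k1, hk1, rfl⟩ ⟨k2, hk2, rfl⟩
      exact ⟨k1 + k2, K.add_mem hk1 hk2, (add_smul _ _ _).symm⟩
  have hJle : ∀ (K K' : Ideal S), K • span S {m} = K' • span S {m} → K ≤ K' := by
    intro K K' hKK' k hk
    have hkm : k • m ∈ K' • span S {m} := by
      rw [← hKK']; exact smul_mem_smul hk (mem_span_singleton_self m)
    obtain ⟨k', hk', hkk⟩ := hmem K' _ hkm
    rw [hc k k' hkk]; exact hk'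
  -- conclude
  refine ⟨t, le_antisymm le_top ?_⟩
  intro x _
  set y : M := ∑ v ∈ t, r x (a v) • v with hy
  have hyN : y ∈ span S (↑t : Set M) :=
    sum_mem fun v hv => Submodule.smul_mem _ _ (subset_span hv)
  obtain ⟨J, hJ⟩ := hM (span S {x})
  obtain ⟨J', hJ'⟩ := hM (span S {y})
  have hsmulxy : I₀ • span S {x} = I₀ • span S {y} :=
    le_antisymm (dir x y fun w => hxy x w) (dir y x fun w => (hxy x w).symm)
  have hJJ' : J • span S {m} = J' • span S {m} := by
    rw [hchain J x hJ, hchain J' y hJ', hsmulxy]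
  have hspanxy : span S {x} = span S {y} := by
    rw [hJ, hJ', le_antisymm (hJle J J' hJJ') (hJle J' J hJJ'.symm)]
  obtain ⟨c, hcx⟩ := mem_span_singleton.mp (hspanxy ▸ mem_span_singleton_self x)
  rw [← hcx]
  exact Submodule.smul_mem _ c hyN
end

section
/- If S is a semidomain and M is a multiplicatively cancellative multiplication S-semimodule, then M is torsionfree: for nonzero t ∈ S, tm = tm' implies m = m'. -/
/-- Over a semidomain, an MC multiplication semimodule is torsionfree. -/
theorem torsionfree_of_MC_multiplication {S M : Type*} [CommSemiring S]
    [AddCommMonoid M] [Module S M]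
    (hdom : ∀ a : S, a ≠ 0 → ∀ b c : S, a * b = a * c → b = c)
    (hMC : ∀ (s s' : S) (m : M), m ≠ 0 → s • m = s' • m → s = s')
    (hM : ∀ N : Submodule S M, ∃ I : Ideal S, N = I • (⊤ : Submodule S M)) :
    ∀ t : S, t ≠ 0 → ∀ m m' : M, t • m = t • m' → m = m' := by
  intro t ht m m' htm
  rcases eq_or_ne m 0 with h0 | h0
  · subst h0
    rw [smul_zero] at htm
    by_contra hm'
    exact ht (hMC t 0 m' (fun h => hm' h.symm) (by rw [zero_smul, ← htm]))
  rcases eq_or_ne m' 0 with h0' | h0'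
  · subst h0'
    rw [smul_zero] at htm
    exact absurd (hMC t 0 m h0 (by rw [zero_smul, htm])) ht
  obtain ⟨I, hI⟩ := hM (Submodule.span S {m'})
  obtain ⟨K, hK⟩ := hM (Submodule.span S {m})
  -- extract a scalar from span membership
  have spanm' : ∀ z : M, z ∈ Submodule.span S ({m'} : Set M) → ∃ c : S, z = c • m' := by
    intro z hz
    rw [Submodule.mem_span_singleton] at hz
    obtain ⟨c, hc⟩ := hz
    exact ⟨c, hc.symm⟩
  have spanm : ∀ z : M, z ∈ Submodule.span S ({m} : Set M) → ∃ c : S, z = c • m := by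
    intro z hz
    rw [Submodule.mem_span_singleton] at hz
    obtain ⟨c, hc⟩ := hz
    exact ⟨c, hc.symm⟩
  -- Claim A : for a ∈ I, a•m = a•m'
  have claimA : ∀ a ∈ I, a • m = a • m' := by
    intro a ha
    obtain ⟨g, hg⟩ := spanm' (a • m) (by rw [hI]; exact Submodule.smul_mem_smul ha trivial)
    have h1 : (t * a) • m' = (t * g) • m' := by
      calc (t * a) • m' = a • (t • m') := by rw [mul_smul]; exact smul_comm t a m'
        _ = a • (t • m) := by rw [htm]
        _ = t • (a • m) := smul_comm a t m
        _ = t • (g • m') := by rw [hg]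
        _ = (t * g) • m' := (mul_smul t g m').symm
    have := hdom t ht a g (hMC (t * a) (t * g) m' h0' h1)
    rw [hg, this]
  -- Claim B : for b ∈ K, b•m' = b•m
  have claimB : ∀ b ∈ K, b • m' = b • m := by
    intro b hb
    obtain ⟨g, hg⟩ := spanm (b • m') (by rw [hK]; exact Submodule.smul_mem_smul hb trivial)
    have h1 : (t * b) • m = (t * g) • m := by
      calc (t * b) • m = b • (t • m) := by rw [mul_smul]; exact smul_comm t b m
        _ = b • (t • m') := by rw [htm]
        _ = t • (b • m') := smul_comm b t m'
        _ = t • (g • m) := by rw [hg]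
        _ = (t * g) • m := (mul_smul t g m).symm
    have := hdom t ht b g (hMC (t * b) (t * g) m h0 h1)
    rw [hg, this]
  -- Claim C : every z ∈ I•⊤ is d•m' with d•m = d•m'
  have claimC : ∀ z ∈ (I • (⊤ : Submodule S M)), ∃ d : S, z = d • m' ∧ d • m = d • m' := by
    intro z hz
    refine Submodule.smul_induction_on hz ?_ ?_
    · intro a ha y _
      obtain ⟨d, hd⟩ := spanm' (a • y) (by rw [hI]; exact Submodule.smul_mem_smul ha trivial)
      refine ⟨d, hd, ?_⟩
      rcases eq_or_ne a 0 with ha0 | ha0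
      · have : d • m' = (0 : S) • m' := by rw [← hd, ha0, zero_smul, zero_smul]
        rw [hMC d 0 m' h0' this, zero_smul, zero_smul]
      -- inner claim D
      have claimD : ∀ w ∈ (K • (⊤ : Submodule S M)),
          ∃ c : S, w = c • m ∧ (d * c) • m = (d * c) • m' := by
        intro w hw
        refine Submodule.smul_induction_on hw ?_ ?_
        · intro b hb x _
          obtain ⟨c, hc⟩ := spanm (b • x) (by rw [hK]; exact Submodule.smul_mem_smul hb trivial)
          obtain ⟨e, he⟩ := spanm' (a • x) (by rw [hI]; exact Submodule.smul_mem_smul ha trivial)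
          obtain ⟨f, hf⟩ := spanm (b • y) (by rw [hK]; exact Submodule.smul_mem_smul hb trivial)
          refine ⟨c, hc, ?_⟩
          have hac : a * c = b * e := by
            refine hMC (a * c) (b * e) m h0 ?_
            calc (a * c) • m = a • (c • m) := by rw [mul_smul]
              _ = a • (b • x) := by rw [hc]
              _ = b • (a • x) := smul_comm a b x
              _ = b • (e • m') := by rw [he]
              _ = e • (b • m') := smul_comm b e m'
              _ = e • (b • m) := by rw [claimB b hb]
              _ = (b * e) • m := by rw [smul_comm, mul_smul]
          have hdb : d * b = a * f := by
            refine hMC (d * b) (a * f) m' h0' ?_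
            calc (d * b) • m' = b • (d • m') := by rw [mul_smul, smul_comm]
              _ = b • (a • y) := by rw [hd]
              _ = a • (b • y) := smul_comm b a y
              _ = a • (f • m) := by rw [hf]
              _ = f • (a • m) := smul_comm a f m
              _ = f • (a • m') := by rw [claimA a ha]
              _ = (a * f) • m' := by rw [smul_comm, mul_smul]
          have hdc : d * c = f * e := by
            refine hdom a ha0 _ _ ?_
            calc a * (d * c) = d * (a * c) := by ring
              _ = d * (b * e) := by rw [hac]
              _ = (d * b) * e := by ring
              _ = (a * f) * e := by rw [hdb]
              _ = a * (f * e) := by ring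
          have key : (d * c) • m' = (d * c) • m :=
            calc (d * c) • m' = (f * e) • m' := by rw [hdc]
            _ = f • (e • m') := by rw [mul_smul]
            _ = f • (a • x) := by rw [he]
            _ = (a * f) • x := by rw [smul_comm, mul_smul]
            _ = (d * b) • x := by rw [hdb]
            _ = d • (b • x) := by rw [mul_smul]
            _ = d • (c • m) := by rw [hc]
            _ = (d * c) • m := by rw [mul_smul]
          exact key.symm
        · rintro w₁ w₂ ⟨c₁, hc₁, hc₁'⟩ ⟨c₂, hc₂, hc₂'⟩
          refine ⟨c₁ + c₂, by rw [add_smul, hc₁, hc₂], ?_⟩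
          rw [mul_add, add_smul, add_smul, hc₁', hc₂']
      obtain ⟨c, hc, hc'⟩ := claimD m (by rw [← hK]; exact Submodule.mem_span_singleton_self m)
      have hc1 : c = 1 := hMC c 1 m h0 (by rw [one_smul, ← hc])
      rw [hc1, mul_one] at hc'
      exact hc'
    · rintro z₁ z₂ ⟨d₁, hd₁, hd₁'⟩ ⟨d₂, hd₂, hd₂'⟩
      refine ⟨d₁ + d₂, by rw [add_smul, hd₁, hd₂], ?_⟩
      rw [add_smul, add_smul, hd₁', hd₂']
  obtain ⟨d, hd, hd'⟩ := claimC m' (by rw [← hI]; exact Submodule.mem_span_singleton_self m')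
  have hd1 : d = 1 := hMC d 1 m' h0' (by rw [one_smul, ← hd])
  rw [hd1, one_smul, one_smul] at hd'
  exact hd'
end

section
/- Every multiplicatively cancellative multiplication S-semimodule is a projective S-semimodule. -/
/-- Every MC multiplication semimodule is projective. -/
theorem projective_of_MC_multiplication {S M : Type*} [CommSemiring S]
    [AddCommMonoid M] [Module S M]
    (hMC : ∀ (s s' : S) (m : M), m ≠ 0 → s • m = s' • m → s = s')
    (hM : ∀ N : Submodule S M, ∃ I : Ideal S, N = I • (⊤ : Submodule S M)) :
    Module.Projective S M := by
  by_cases htriv : ∀ x : M, x = 0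
  · refine ⟨⟨0, fun w => ?_⟩⟩
    simp only [LinearMap.zero_apply, map_zero]
    exact (htriv w).symm
  · push_neg at htriv
    obtain ⟨m, hm⟩ := htriv
    obtain ⟨I, hI⟩ := hM (Submodule.span S {m})
    -- a uniqueness principle via cancellation at m
    have huniq : ∀ s s' : S, s • m = s' • m → s = s' := fun s s' h => hMC s s' m hm h
    -- finite decomposition m = ∑ a i • v i with a i ∈ I
    have hmem : m ∈ I • (⊤ : Submodule S M) := by
      rw [← hI]; exact Submodule.mem_span_singleton_self m
    have hrep : ∃ (n : ℕ) (a : Fin n → S) (v : Fin n → M),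
        (∀ i, a i ∈ I) ∧ (∑ i, a i • v i) = m := by
      refine Submodule.smul_induction_on hmem ?_ ?_
      · intro r hr x _
        exact ⟨1, fun _ => r, fun _ => x, fun _ => hr, by simp⟩
      · rintro x y ⟨n₁, a₁, v₁, h₁, e₁⟩ ⟨n₂, a₂, v₂, h₂, e₂⟩
        refine ⟨n₁ + n₂, Fin.append a₁ a₂, Fin.append v₁ v₂, ?_, ?_⟩
        · intro i
          refine Fin.addCases (fun j => ?_) (fun j => ?_) i
          · rw [Fin.append_left]; exact h₁ j
          · rw [Fin.append_right]; exact h₂ j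
        · rw [Fin.sum_univ_add]
          simp only [Fin.append_left, Fin.append_right]
          rw [e₁, e₂]
    obtain ⟨n, a, v, haI, hsum⟩ := hrep
    -- the dual functionals F i
    have hex : ∀ (i : Fin n) (w : M), ∃ s : S, s • m = a i • w := by
      intro i w
      refine Submodule.mem_span_singleton.mp ?_
      rw [hI]
      exact Submodule.smul_mem_smul (haI i) Submodule.mem_top
    choose F hF using hex
    -- key scalar identity (B)
    have hB : ∀ j : Fin n, (∑ i, F j (v i) * a i) = a j := by
      intro j
      apply huniq
      calc (∑ i, F j (v i) * a i) • m
          = ∑ i, (F j (v i) * a i) • m := by rw [Finset.sum_smul]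
        _ = ∑ i, a i • (F j (v i) • m) := by
            refine Finset.sum_congr rfl fun i _ => ?_
            rw [mul_comm, mul_smul]
        _ = ∑ i, a i • (a j • v i) := by
            refine Finset.sum_congr rfl fun i _ => ?_
            rw [hF]
        _ = ∑ i, a j • (a i • v i) := by
            refine Finset.sum_congr rfl fun i _ => ?_
            rw [smul_comm]
        _ = a j • ∑ i, a i • v i := by rw [Finset.smul_sum]
        _ = a j • m := by rw [hsum]
    -- fingerprint identity (A)
    have hA : ∀ (j : Fin n) (x : M), a j • (∑ i, F i x • v i) = a j • x := by
      intro j x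
      calc a j • (∑ i, F i x • v i)
          = ∑ i, a j • (F i x • v i) := by rw [Finset.smul_sum]
        _ = ∑ i, F i x • (a j • v i) := by
            refine Finset.sum_congr rfl fun i _ => ?_
            rw [smul_comm]
        _ = ∑ i, F i x • (F j (v i) • m) := by
            refine Finset.sum_congr rfl fun i _ => ?_
            rw [hF]
        _ = ∑ i, F j (v i) • (F i x • m) := by
            refine Finset.sum_congr rfl fun i _ => ?_
            rw [smul_comm]
        _ = ∑ i, F j (v i) • (a i • x) := by
            refine Finset.sum_congr rfl fun i _ => ?_
            rw [hF]
        _ = ∑ i, (F j (v i) * a i) • x := by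
            refine Finset.sum_congr rfl fun i _ => ?_
            rw [mul_smul]
        _ = (∑ i, F j (v i) * a i) • x := by rw [Finset.sum_smul]
        _ = a j • x := by rw [hB j]
    -- cancellation principle (★)
    have hstar : ∀ e e' : S, (∀ i, a i * e = a i * e') → e = e' := by
      intro e e' h
      apply huniq
      calc e • m = e • ∑ i, a i • v i := by rw [hsum]
        _ = ∑ i, e • (a i • v i) := by rw [Finset.smul_sum]
        _ = ∑ i, (a i * e) • v i := by
            refine Finset.sum_congr rfl fun i _ => ?_
            rw [mul_comm, mul_smul]
        _ = ∑ i, (a i * e') • v i := by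
            refine Finset.sum_congr rfl fun i _ => ?_
            rw [h i]
        _ = ∑ i, e' • (a i • v i) := by
            refine Finset.sum_congr rfl fun i _ => ?_
            rw [mul_comm, mul_smul]
        _ = e' • ∑ i, a i • v i := by rw [Finset.smul_sum]
        _ = e' • m := by rw [hsum]
    -- the ideal generated by the a i
    set I' : Ideal S := Ideal.span (Set.range a) with hI'def
    have hI' : I' • (⊤ : Submodule S M) = Submodule.span S {m} := by
      apply le_antisymm
      · have h1 : I' ≤ I := Ideal.span_le.mpr (by rintro _ ⟨i, rfl⟩; exact haI i)
        rw [hI]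
        exact Submodule.smul_mono_left h1
      · rw [Submodule.span_le, Set.singleton_subset_iff]
        rw [← hsum]
        exact Submodule.sum_mem _ fun i _ =>
          Submodule.smul_mem_smul (Ideal.subset_span ⟨i, rfl⟩) Submodule.mem_top
    -- the key identity: ∑ i, F i x • v i = x
    have key : ∀ x : M, (∑ i, F i x • v i) = x := by
      intro x
      set y := ∑ i, F i x • v i with hy
      -- the equalizer ideal Λ
      set Λ : Ideal S :=
        { carrier := {s : S | s • x = s • y}
          add_mem' := by
            intro p q hp hq
            simp only [Set.mem_setOf_eq, add_smul] at *
            rw [hp, hq]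
          zero_mem' := by simp
          smul_mem' := by
            intro c s hs
            simp only [Set.mem_setOf_eq, smul_eq_mul, mul_smul] at *
            rw [hs] } with hΛdef
      have hΛmem : ∀ s : S, s ∈ Λ ↔ s • x = s • y := fun s => Iff.rfl
      -- every colon-style ideal lands in Λ
      have hIΛ : ∀ z : M, z ≠ 0 → ∀ J : Ideal S,
          Submodule.span S {z} = J • (⊤ : Submodule S M) → J ≤ Λ := by
        intro z hz J hJz c hc
        have h1 : c • x ∈ Submodule.span S {z} := by
          rw [hJz]; exact Submodule.smul_mem_smul hc Submodule.mem_top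
        have h2 : c • y ∈ Submodule.span S {z} := by
          rw [hJz]; exact Submodule.smul_mem_smul hc Submodule.mem_top
        obtain ⟨e, he⟩ := Submodule.mem_span_singleton.mp h1
        obtain ⟨e', he'⟩ := Submodule.mem_span_singleton.mp h2
        have hee : ∀ i, a i * e = a i * e' := by
          intro i
          apply hMC _ _ z hz
          calc (a i * e) • z = a i • (e • z) := by rw [mul_smul]
            _ = a i • (c • x) := by rw [he]
            _ = c • (a i • x) := by rw [smul_comm]
            _ = c • (a i • y) := by rw [← hA i x]
            _ = a i • (c • y) := by rw [smul_comm]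
            _ = a i • (e' • z) := by rw [he']
            _ = (a i * e') • z := by rw [mul_smul]
        have hee' : e = e' := hstar e e' hee
        show c • x = c • y
        rw [← he, ← he', hee']
      -- Λ • ⊤ = ⊤
      have htop : Λ • (⊤ : Submodule S M) = ⊤ := by
        refine le_antisymm le_top ?_
        intro w _
        by_cases hw : w = 0
        · rw [hw]; exact Submodule.zero_mem _
        · obtain ⟨J, hJw⟩ := hM (Submodule.span S {w})
          have hwmem : w ∈ J • (⊤ : Submodule S M) := by
            rw [← hJw]; exact Submodule.mem_span_singleton_self w
          exact Submodule.smul_mono_left (hIΛ w hw J hJw) hwmem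
      -- hence span{m} = Λ • span{m}
      have hspan : Submodule.span S ({m} : Set M) = Λ • Submodule.span S {m} := by
        calc Submodule.span S ({m} : Set M) = I' • (⊤ : Submodule S M) := hI'.symm
          _ = I' • (Λ • (⊤ : Submodule S M)) := by rw [htop]
          _ = (I' • Λ) • (⊤ : Submodule S M) := (Submodule.smul_assoc _ _ _).symm
          _ = (Λ • I') • (⊤ : Submodule S M) := by
              rw [Ideal.smul_eq_mul, Ideal.smul_eq_mul, mul_comm]
          _ = Λ • (I' • (⊤ : Submodule S M)) := Submodule.smul_assoc _ _ _
          _ = Λ • Submodule.span S {m} := by rw [hI']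
      have hmm2 : m ∈ Λ • Submodule.span S ({m} : Set M) := by
        rw [← hspan]; exact Submodule.mem_span_singleton_self m
      obtain ⟨c, hcΛ, hcm⟩ := Submodule.mem_smul_span_singleton.mp hmm2
      have hc1 : c = 1 := huniq c 1 (by rw [hcm, one_smul])
      have h1Λ : (1 : S) ∈ Λ := hc1 ▸ hcΛ
      have h1 : (1 : S) • x = (1 : S) • y := (hΛmem 1).mp h1Λ
      rw [one_smul, one_smul] at h1
      exact h1.symm
    -- linearity of the F i
    have hFadd : ∀ (i : Fin n) (w w' : M), F i (w + w') = F i w + F i w' := by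
      intro i w w'
      apply huniq
      rw [hF, add_smul, hF, hF, smul_add]
    have hFsmul : ∀ (i : Fin n) (t : S) (w : M), F i (t • w) = t * F i w := by
      intro i t w
      apply huniq
      rw [hF, mul_smul, hF]
      exact smul_comm (a i) t w
    -- assemble the projectivity data
    refine ⟨⟨{ toFun := fun w => ∑ i, Finsupp.single (v i) (F i w)
               map_add' := ?_
               map_smul' := ?_ }, fun w => ?_⟩⟩
    · intro w w'
      simp only [hFadd, Finsupp.single_add, Finset.sum_add_distrib]
    · intro t w
      simp only [hFsmul, RingHom.id_apply, Finset.smul_sum, Finsupp.smul_single, smul_eq_mul]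
    · show Finsupp.linearCombination S id (∑ i, Finsupp.single (v i) (F i w)) = w
      rw [map_sum]
      simp only [Finsupp.linearCombination_single, id_eq]
      exact key w
end

section
/- Let S be a yoked commutative semiring in which every maximal ideal is subtractive, M a cancellative S-semimodule, and p a maximal ideal of S. Then N = {m ∈ M : m = qm for some q ∈ p} is a subsemimodule of M. -/
/-- Over a yoked semiring with subtractive maximal ideals, for a cancellative
semimodule M and maximal ideal p, the set {m : m = qm for some q ∈ p} is a
subsemimodule of M. -/
theorem exists_submodule_of_fixed_set {S M : Type*} [CommSemiring S]
    [AddCommMonoid M] [Module S M]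
    (hyoked : ∀ a b : S, ∃ t : S, a + t = b ∨ b + t = a)
    (hsub : ∀ q : Ideal S, q.IsMaximal → ∀ a b : S, a + b ∈ q → b ∈ q → a ∈ q)
    (hcanc : ∀ m m1 m2 : M, m + m1 = m + m2 → m1 = m2)
    (p : Ideal S) (hp : p.IsMaximal) :
    ∃ N : Submodule S M, (N : Set M) = {m : M | ∃ q ∈ p, m = q • m} := by
  have key : ∀ m n : M, (∃ q ∈ p, m = q • m) → (∃ r ∈ p, n = r • n) →
      ∃ t ∈ p, m + n = t • (m + n) := by
    rintro m n ⟨q, hq, hm⟩ ⟨r, hr, hn⟩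
    have h1 : (q * r) • m = r • m := by rw [mul_comm, mul_smul, ← hm]
    have h2 : (q * r) • n = q • n := by rw [mul_smul, ← hn]
    obtain ⟨s, hs | hs⟩ := hyoked (q * r) (q + r)
    · -- q*r + s = q + r
      have hsp : s ∈ p := hsub p hp s (q * r)
        (by rw [add_comm, hs]; exact p.add_mem hq hr) (p.mul_mem_right r hq)
      have hsm : s • m = m := by
        have h := congrArg (· • m) hs
        simp only [add_smul, h1] at h
        exact hcanc (r • m) _ _ (by rw [h, ← hm, add_comm])
      have hsn : s • n = n := by
        have h := congrArg (· • n) hs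
        simp only [add_smul, h2] at h
        rw [hcanc (q • n) _ _ h, ← hn]
      exact ⟨s, hsp, by rw [smul_add, hsm, hsn]⟩
    · -- q + r + s = q*r
      have hsp : s ∈ p := hsub p hp s (q + r)
        (by rw [add_comm, hs]; exact p.mul_mem_right r hq) (p.add_mem hq hr)
      have hsm : m + s • m = 0 := by
        have h := congrArg (· • m) hs
        simp only [add_smul, h1, ← hm] at h
        refine hcanc (r • m) _ _ ?_
        conv_rhs => rw [add_zero, ← h]
        abel
      have hsn : n + s • n = 0 := by
        have h := congrArg (· • n) hs
        simp only [add_smul, h2, ← hn] at h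
        refine hcanc (q • n) _ _ ?_
        conv_rhs => rw [add_zero, ← h]
        abel
      have hsm2 : (s * s) • m = m := by
        have : s • m + (s * s) • m = s • m + m := by
          rw [mul_smul, ← smul_add, hsm, smul_zero, add_comm (s • m) m, hsm]
        exact hcanc _ _ _ this
      have hsn2 : (s * s) • n = n := by
        have : s • n + (s * s) • n = s • n + n := by
          rw [mul_smul, ← smul_add, hsn, smul_zero, add_comm (s • n) n, hsn]
        exact hcanc _ _ _ this
      exact ⟨s * s, p.mul_mem_right s hsp, by rw [smul_add, hsm2, hsn2]⟩
  refine ⟨{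
    carrier := {m : M | ∃ q ∈ p, m = q • m}
    zero_mem' := ⟨0, p.zero_mem, by simp⟩
    add_mem' := fun ha hb => key _ _ ha hb
    smul_mem' := by
      rintro c m ⟨q, hq, hm⟩
      exact ⟨q, hq, by rw [smul_comm]; exact congrArg (c • ·) hm⟩ }, rfl⟩
end

section
/- Let S be a yoked commutative semiring whose maximal ideals are all subtractive, and M a cancellative S-semimodule generated by elements {m_λ}. Then M is a multiplication semimodule if and only if there exist ideals I_λ of S with Sm_λ = I_λ M for all λ. -/
/-- Over a yoked semiring with subtractive maximal ideals, a cancellative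
semimodule M = Σ Sm_λ is a multiplication semimodule iff there exist ideals I_λ
with Sm_λ = I_λ M for all λ. -/
theorem multiplication_iff_generators {S M : Type*} [CommSemiring S]
    [AddCommMonoid M] [Module S M] {ι : Type*}
    (hyoked : ∀ a b : S, ∃ t : S, a + t = b ∨ b + t = a)
    (hsub : ∀ q : Ideal S, q.IsMaximal → ∀ a b : S, a + b ∈ q → b ∈ q → a ∈ q)
    (hcanc : ∀ m m1 m2 : M, m + m1 = m + m2 → m1 = m2)
    (m : ι → M) (hgen : (⊤ : Submodule S M) = Submodule.span S (Set.range m)) :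
    (∀ N : Submodule S M, ∃ I : Ideal S, N = I • (⊤ : Submodule S M)) ↔
    (∃ I : ι → Ideal S, ∀ l : ι,
      Submodule.span S {m l} = I l • (⊤ : Submodule S M)) := by
  constructor
  · intro h
    choose I hI using fun l => h (Submodule.span S {m l})
    exact ⟨I, hI⟩
  · rintro ⟨I, hI⟩ N
    set J : Ideal S :=
      { carrier := {s : S | ∀ x : M, s • x ∈ N}
        add_mem' := fun {a b} ha hb x => by
          rw [add_smul]; exact N.add_mem (ha x) (hb x)
        zero_mem' := fun x => by rw [zero_smul]; exact N.zero_mem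
        smul_mem' := fun c s hs x => by
          rw [smul_eq_mul, mul_smul]; exact N.smul_mem c (hs x) } with hJ
    refine ⟨J, le_antisymm ?_ (Submodule.smul_le.2 fun s hs x hx => hs x)⟩
    intro n hn
    -- the ideal of scalars s with s • n ∈ J • ⊤
    set K : Ideal S := Submodule.comap (LinearMap.toSpanSingleton S M n)
      (J • (⊤ : Submodule S M)) with hK
    have hKeq : K = ⊤ := by
      by_contra hKne
      obtain ⟨q, hqmax, hKq⟩ := Ideal.exists_le_maximal K hKne
      have hqprime : q.IsPrime := hqmax.isPrime
      by_cases hcase : ∀ l : ι, I l ≤ q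
      · -- every I l ⊆ q : each generator is killed by some t ∉ q
        have htop : (⊤ : Submodule S M) = q • ⊤ := by
          refine le_antisymm ?_ le_top
          conv_lhs => rw [hgen]
          refine Submodule.span_le.mpr ?_
          rintro _ ⟨l, rfl⟩
          have h0 : m l ∈ Submodule.span S {m l} := Submodule.mem_span_singleton_self _
          rw [hI l] at h0
          exact Submodule.smul_mono_left (hcase l) h0
        have hkill : ∀ l : ι, ∃ t : S, t ∉ q ∧ t • m l = 0 := by
          intro l
          have h1 : Submodule.span S {m l} = q • Submodule.span S {m l} :=
            calc Submodule.span S {m l} = I l • (⊤ : Submodule S M) := hI l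
              _ = I l • (q • (⊤ : Submodule S M)) := by rw [← htop]
              _ = (I l • q) • (⊤ : Submodule S M) := (Submodule.smul_assoc _ _ _).symm
              _ = (q • I l) • (⊤ : Submodule S M) := by
                  rw [Ideal.smul_eq_mul, Ideal.smul_eq_mul, mul_comm]
              _ = q • (I l • (⊤ : Submodule S M)) := Submodule.smul_assoc _ _ _
              _ = q • Submodule.span S {m l} := by rw [← hI l]
          have h2 : m l ∈ q • Submodule.span S {m l} := by
            rw [← h1]; exact Submodule.mem_span_singleton_self _
          have h3 : ∃ p ∈ q, p • m l = m l := by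
            have hle : q • Submodule.span S {m l} ≤
                Submodule.map (LinearMap.toSpanSingleton S M (m l)) q := by
              refine Submodule.smul_le.2 fun s hs y hy => ?_
              obtain ⟨c, rfl⟩ := Submodule.mem_span_singleton.mp hy
              exact Submodule.mem_map.mpr ⟨s * c, q.mul_mem_right c hs, by
                simp [LinearMap.toSpanSingleton_apply, mul_smul]⟩
            obtain ⟨p, hp, hpe⟩ := Submodule.mem_map.mp (hle h2)
            exact ⟨p, hp, by simpa using hpe⟩
          obtain ⟨p, hpq, hpm⟩ := h3
          obtain ⟨t, ht | ht⟩ := hyoked p 1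
          · -- p + t = 1
            refine ⟨t, fun htq => hqmax.ne_top (q.eq_top_iff_one.mpr ?_), ?_⟩
            · exact ht ▸ q.add_mem hpq htq
            · refine hcanc (m l) _ 0 ?_
              rw [add_zero]
              calc m l + t • m l = p • m l + t • m l := by rw [hpm]
                _ = (p + t) • m l := (add_smul p t (m l)).symm
                _ = m l := by rw [ht, one_smul]
          · -- 1 + t = p
            refine ⟨t, fun htq => hqmax.ne_top (q.eq_top_iff_one.mpr
              (hsub q hqmax 1 t (ht ▸ hpq) htq)), ?_⟩
            refine hcanc (m l) _ 0 ?_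
            rw [add_zero]
            calc m l + t • m l = (1 + t) • m l := by rw [add_smul, one_smul]
              _ = p • m l := by rw [ht]
              _ = m l := hpm
        choose t htq htm using hkill
        -- n is annihilated by some s ∉ q
        have hann : ∃ s : S, s ∉ q ∧ s • n = 0 := by
          have hn' : n ∈ Submodule.span S (Set.range m) := hgen ▸ Submodule.mem_top
          refine Submodule.span_induction ?_ ⟨1, fun h1 => hqmax.ne_top
            (q.eq_top_iff_one.mpr h1), one_smul S (0:M)⟩ ?_ ?_ hn'
          · rintro _ ⟨l, rfl⟩
            exact ⟨t l, htq l, htm l⟩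
          · rintro x y - - ⟨s1, hs1, hx⟩ ⟨s2, hs2, hy⟩
            refine ⟨s1 * s2, fun hm => ?_, ?_⟩
            · rcases hqprime.mem_or_mem hm with h | h
              exacts [hs1 h, hs2 h]
            · have e1 : (s1 * s2) • x = 0 := by rw [mul_comm, mul_smul, hx, smul_zero]
              have e2 : (s1 * s2) • y = 0 := by rw [mul_smul, hy, smul_zero]
              rw [smul_add, e1, e2, add_zero]
          · rintro c x - ⟨s, hs, hx⟩
            exact ⟨s, hs, by rw [smul_comm, hx, smul_zero]⟩
        obtain ⟨s, hs, hsn⟩ := hann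
        exact hs (hKq (by
          simp only [hK, Submodule.mem_comap, LinearMap.toSpanSingleton_apply, hsn]
          exact Submodule.zero_mem _))
      · -- some a ∈ I l, a ∉ q
        push_neg at hcase
        obtain ⟨l, hl⟩ := hcase
        obtain ⟨a, hal, haq⟩ := SetLike.not_le_iff_exists.mp hl
        have han : a • n ∈ Submodule.span S {m l} := by
          rw [hI l]; exact Submodule.smul_mem_smul hal Submodule.mem_top
        obtain ⟨r, hr⟩ := Submodule.mem_span_singleton.mp han
        have hraJ : r * a ∈ J := by
          intro x
          have hax : a • x ∈ Submodule.span S {m l} := by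
            rw [hI l]; exact Submodule.smul_mem_smul hal Submodule.mem_top
          obtain ⟨c, hc⟩ := Submodule.mem_span_singleton.mp hax
          have key : (r * a) • x = (c * a) • n :=
            calc (r * a) • x = r • (a • x) := mul_smul r a x
              _ = r • (c • m l) := by rw [hc]
              _ = c • (r • m l) := smul_comm r c (m l)
              _ = c • (a • n) := by rw [hr]
              _ = (c * a) • n := (mul_smul c a n).symm
          rw [key]
          exact N.smul_mem _ hn
        have haaK : a * a ∈ K := by
          simp only [hK, Submodule.mem_comap, LinearMap.toSpanSingleton_apply]
          have key : (a * a) • n = (r * a) • m l :=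
            calc (a * a) • n = a • (a • n) := mul_smul a a n
              _ = a • (r • m l) := by rw [hr]
              _ = (a * r) • m l := (mul_smul a r (m l)).symm
              _ = (r * a) • m l := by rw [mul_comm]
          rw [key]
          exact Submodule.smul_mem_smul hraJ Submodule.mem_top
        exact haq (((hqprime.mem_or_mem (hKq haaK))).elim id id)
    have : (1 : S) ∈ K := hKeq ▸ Submodule.mem_top
    simpa [hK, Submodule.mem_comap, LinearMap.toSpanSingleton_apply] using this
end

section
/- Let S be a yoked commutative semiring whose maximal ideals are subtractive, and M a cancellative faithful multiplication S-semimodule. Then M is finitely generated if and only if M ≠ pM for every maximal ideal p of S. -/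
section Aux

variable {S M : Type*} [CommSemiring S] [AddCommMonoid M] [Module S M]

/-- Subtractive closure of a submodule. -/
def subClosure (N : Submodule S M) : Submodule S M where
  carrier := {x | ∃ c ∈ N, x + c ∈ N}
  zero_mem' := ⟨0, N.zero_mem, by simp [N.zero_mem]⟩
  add_mem' := by
    rintro x y ⟨c, hc, hxc⟩ ⟨d, hd, hyd⟩
    exact ⟨c + d, add_mem hc hd, by
      have : x + y + (c + d) = (x + c) + (y + d) := by abel
      rw [this]; exact add_mem hxc hyd⟩
  smul_mem' := by
    rintro r x ⟨c, hc, hxc⟩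
    exact ⟨r • c, N.smul_mem r hc, by rw [← smul_add]; exact N.smul_mem r hxc⟩

theorem mem_subClosure {N : Submodule S M} {x : M} :
    x ∈ subClosure N ↔ ∃ c ∈ N, x + c ∈ N := Iff.rfl

theorem le_subClosure (N : Submodule S M) : N ≤ subClosure N :=
  fun x hx => ⟨0, N.zero_mem, by simpa using hx⟩

theorem subClosure_bot : subClosure (⊥ : Submodule S M) = ⊥ := by
  ext x
  simp [mem_subClosure, Submodule.mem_bot]

theorem subClosure_cancel {N : Submodule S M} {x c : M}
    (h1 : x + c ∈ subClosure N) (h2 : c ∈ subClosure N) : x ∈ subClosure N := by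
  obtain ⟨e, he, hxe⟩ := h1
  obtain ⟨f, hf, hcf⟩ := h2
  refine ⟨c + e + f, ?_, ?_⟩
  · have : c + e + f = (c + f) + e := by abel
    rw [this]; exact add_mem hcf he
  · have : x + (c + e + f) = (x + c + e) + f := by abel
    rw [this]; exact add_mem hxe hf

theorem smul_subClosure_le (p : Ideal S) (K : Submodule S M) :
    p • subClosure K ≤ subClosure (p • K) := by
  refine Submodule.smul_le.2 ?_
  rintro a ha x ⟨c, hc, hxc⟩
  exact ⟨a • c, Submodule.smul_mem_smul ha hc, by
    rw [← smul_add]; exact Submodule.smul_mem_smul ha hxc⟩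

/-- The ideal of scalars `r` with `r • M ⊆ N`. -/
def colonTop (N : Submodule S M) : Ideal S where
  carrier := {r | ∀ x : M, r • x ∈ N}
  zero_mem' := fun x => by rw [zero_smul]; exact N.zero_mem
  add_mem' := fun h1 h2 x => by rw [add_smul]; exact add_mem (h1 x) (h2 x)
  smul_mem' := fun c r h x => by
    rw [smul_eq_mul, mul_smul]; exact N.smul_mem c (h x)

theorem mem_colonTop {N : Submodule S M} {r : S} :
    r ∈ colonTop N ↔ ∀ x : M, r • x ∈ N := Iff.rfl

/-- Nakayama-type induction over semirings. -/
theorem nak_aux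
    (hyoked : ∀ a b : S, ∃ t : S, a + t = b ∨ b + t = a)
    (hsub : ∀ q : Ideal S, q.IsMaximal → ∀ a b : S, a + b ∈ q → b ∈ q → a ∈ q)
    (hcanc : ∀ m m1 m2 : M, m + m1 = m + m2 → m1 = m2)
    (p : Ideal S) (hp : p.IsMaximal)
    (hpM : p • (⊤ : Submodule S M) = ⊤) :
    ∀ s : Finset M, ∀ v : S, v ∉ p →
      (∀ x : M, v • x ∈ subClosure (Submodule.span S (s : Set M))) →
      ∃ u : S, u ∉ p ∧ ∀ x : M, u • x = 0 := by
  classical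
  intro s
  induction s using Finset.induction_on with
  | empty =>
      intro v hv hvD
      refine ⟨v, hv, fun x => ?_⟩
      have := hvD x
      rw [Finset.coe_empty, Submodule.span_empty, subClosure_bot,
        Submodule.mem_bot] at this
      exact this
  | @insert m s' hms IH =>
      intro v hv hvD
      rw [Finset.coe_insert] at hvD
      set N' : Submodule S M := Submodule.span S (s' : Set M) with hN'
      -- v • m ∈ p • ⊤
      have h1 : v • m ∈ p • (⊤ : Submodule S M) := by rw [hpM]; trivial
      -- v • (v • m) ∈ p • subClosure (span (insert m s'))
      have h2 : v • (v • m) ∈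
          p • subClosure (Submodule.span S (insert m (s' : Set M))) := by
        refine Submodule.smul_induction_on h1 ?_ ?_
        · intro a ha y _
          rw [smul_comm]
          exact Submodule.smul_mem_smul ha (hvD y)
        · intro y z hy hz
          rw [smul_add]
          exact add_mem hy hz
      have h3 := smul_subClosure_le p _ h2
      obtain ⟨c, hc, hd⟩ := h3
      have hNsplit : p • Submodule.span S (insert m (s' : Set M)) =
          p • Submodule.span S ({m} : Set M) ⊔ p • N' := by
        rw [Submodule.span_insert, Submodule.smul_sup]
      rw [hNsplit] at hc hd
      obtain ⟨cm, hcm, c', hc', hcsum⟩ := Submodule.mem_sup.1 hc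
      obtain ⟨dm, hdm, d', hd', hdsum⟩ := Submodule.mem_sup.1 hd
      obtain ⟨b, hb, hbm⟩ := Submodule.mem_smul_span_singleton.1 hcm
      obtain ⟨a, ha, ham⟩ := Submodule.mem_smul_span_singleton.1 hdm
      have hc'N : c' ∈ N' := Submodule.smul_le_right hc'
      have hd'N : d' ∈ N' := Submodule.smul_le_right hd'
      -- key equation
      have E : v • (v • m) + (b • m + c') = a • m + d' := by
        rw [hbm, ham, hcsum, hdsum]
      -- compare a and v*v + b
      obtain ⟨t, ht⟩ := hyoked a (v * v + b)
      have key : t ∉ p ∧ t • m ∈ subClosure N' := by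
        rcases ht with ht | ht
        · -- a + t = v*v + b
          constructor
          · intro htp
            have hvvb : v * v + b ∈ p := ht ▸ p.add_mem ha htp
            have hvv : v * v ∈ p := hsub p hp (v * v) b hvvb hb
            exact hv ((hp.isPrime.mem_or_mem hvv).elim id id)
          · have hcalc : (v • (v • m) + b • m) + (c' + t • m) =
                (v • (v • m) + b • m) + d' := by
              have l1 : (v • (v • m) + b • m) + (c' + t • m) =
                  (v • (v • m) + (b • m + c')) + t • m := by abel
              rw [l1, E]
              have l2 : a • m + d' + t • m = (a + t) • m + d' := by
                rw [add_smul]; abel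
              rw [l2, ht, add_smul, mul_smul]
              try abel
            have := hcanc _ _ _ hcalc
            exact ⟨c', hc'N, by rw [add_comm, this]; exact hd'N⟩
        · -- v*v + b + t = a
          constructor
          · intro htp
            have hbt : b + t ∈ p := p.add_mem hb htp
            have hvv : v * v ∈ p := hsub p hp (v * v) (b + t)
              (by rw [← add_assoc, ht]; exact ha) hbt
            exact hv ((hp.isPrime.mem_or_mem hvv).elim id id)
          · have hcalc : (v • (v • m) + b • m) + c' =
                (v • (v • m) + b • m) + (d' + t • m) := by
              have l1 : (v • (v • m) + b • m) + c' =
                  v • (v • m) + (b • m + c') := by abel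
              rw [l1, E, ← ht, add_smul, add_smul, mul_smul]
              abel
            have := hcanc _ _ _ hcalc
            exact ⟨d', hd'N, by rw [add_comm] at this; rw [← this]; exact hc'N⟩
      obtain ⟨htp, htm⟩ := key
      -- elements of the big span, multiplied by t, land in subClosure N'
      have hN : ∀ y ∈ Submodule.span S (insert m (s' : Set M)),
          t • y ∈ subClosure N' := by
        intro y hy
        rw [Submodule.span_insert] at hy
        obtain ⟨z, hz, y', hy', rfl⟩ := Submodule.mem_sup.1 hy
        obtain ⟨α, rfl⟩ := Submodule.mem_span_singleton.1 hz
        rw [smul_add, smul_comm t α]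
        exact add_mem (Submodule.smul_mem _ α htm)
          (le_subClosure N' (N'.smul_mem t hy'))
      have hu : t * v ∉ p := fun h =>
        (hp.isPrime.mem_or_mem h).elim htp hv
      refine IH (t * v) hu ?_
      intro x
      rw [mul_smul]
      obtain ⟨c₀, hc₀, hxc₀⟩ := hvD x
      refine subClosure_cancel (c := t • c₀) ?_ (hN _ hc₀)
      rw [← smul_add]
      exact hN _ hxc₀

end Aux

/-- Over a yoked semiring with subtractive maximal ideals, a cancellative
faithful multiplication semimodule M is finitely generated iff M ≠ pM for
every maximal ideal p. -/
theorem fg_iff_ne_smul_maximal {S M : Type*} [CommSemiring S]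
    [AddCommMonoid M] [Module S M]
    (hyoked : ∀ a b : S, ∃ t : S, a + t = b ∨ b + t = a)
    (hsub : ∀ q : Ideal S, q.IsMaximal → ∀ a b : S, a + b ∈ q → b ∈ q → a ∈ q)
    (hcanc : ∀ m m1 m2 : M, m + m1 = m + m2 → m1 = m2)
    (hfaith : ∀ t : S, (∀ x : M, t • x = 0) → t = 0)
    (hM : ∀ N : Submodule S M, ∃ I : Ideal S, N = I • (⊤ : Submodule S M)) :
    (⊤ : Submodule S M).FG ↔
    (∀ p : Ideal S, p.IsMaximal → p • (⊤ : Submodule S M) ≠ ⊤) := by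
  constructor
  · -- finitely generated ⟹ M ≠ pM
    rintro ⟨s, hs⟩ p hp hpM
    have h1 : (1 : S) ∉ p := fun h => hp.ne_top (Ideal.eq_top_of_isUnit_mem p h isUnit_one)
    obtain ⟨u, hup, hu0⟩ :=
      nak_aux hyoked hsub hcanc p hp hpM s 1 h1
        (fun x => by
          rw [one_smul]
          exact le_subClosure _ (by rw [hs]; trivial))
    have : u = 0 := hfaith u hu0
    rw [this] at hup
    exact hup p.zero_mem
  · -- M ≠ pM for all maximal p ⟹ finitely generated
    intro h
    set T : Ideal S := ⨆ m : M, colonTop (Submodule.span S ({m} : Set M)) with hTdef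
    have hT : T = ⊤ := by
      by_contra hT
      obtain ⟨p, hp, hTp⟩ := Ideal.exists_le_maximal T hT
      have hne := h p hp
      have hex : ∃ x : M, x ∉ p • (⊤ : Submodule S M) := by
        by_contra hx
        push_neg at hx
        exact hne (le_antisymm le_top fun y _ => hx y)
      obtain ⟨x, hx⟩ := hex
      obtain ⟨I, hI⟩ := hM (Submodule.span S ({x} : Set M))
      have hInotle : ¬ I ≤ p := by
        intro hle
        apply hx
        have hsp : Submodule.span S ({x} : Set M) ≤ p • ⊤ := by
          rw [hI]; exact Submodule.smul_mono hle le_rfl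
        exact hsp (Submodule.mem_span_singleton_self x)
      obtain ⟨q, hqI, hqp⟩ := SetLike.not_le_iff_exists.1 hInotle
      apply hqp
      apply hTp
      have hqmem : q ∈ colonTop (Submodule.span S ({x} : Set M)) := by
        intro y
        rw [hI]
        exact Submodule.smul_mem_smul hqI trivial
      exact le_iSup (fun m : M => colonTop (Submodule.span S ({m} : Set M))) x hqmem
    have h1 : (1 : S) ∈ T := by rw [hT]; trivial
    rw [hTdef, Submodule.mem_iSup_iff_exists_finset] at h1
    obtain ⟨s, hs⟩ := h1
    refine ⟨s, ?_⟩
    rw [eq_top_iff]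
    intro y _
    have hle : (⨆ m ∈ s, colonTop (Submodule.span S ({m} : Set M))) ≤
        colonTop (Submodule.span S (s : Set M)) := by
      refine iSup_le fun m => iSup_le fun hm => ?_
      intro r hr x
      exact Submodule.span_mono (Set.singleton_subset_iff.2 hm) (hr x)
    have := hle hs y
    simpa using this
end

section
/- Let S be a yoked commutative semiring whose maximal ideals are subtractive, M a cancellative faithful multiplication S-semimodule, and suppose M ≠ pM for every maximal ideal p. If I and J are ideals of S with IM ⊆ JM, then I ⊆ J. -/
/-- Over a yoked semiring with subtractive maximal ideals, for a cancellative
faithful multiplication semimodule with M ≠ pM for each maximal p: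
IM ⊆ JM implies I ⊆ J. -/
theorem ideal_le_of_smul_le_of_yoked {S M : Type*} [CommSemiring S]
    [AddCommMonoid M] [Module S M]
    (hyoked : ∀ a b : S, ∃ t : S, a + t = b ∨ b + t = a)
    (hsub : ∀ q : Ideal S, q.IsMaximal → ∀ a b : S, a + b ∈ q → b ∈ q → a ∈ q)
    (hcanc : ∀ m m1 m2 : M, m + m1 = m + m2 → m1 = m2)
    (hfaith : ∀ t : S, (∀ x : M, t • x = 0) → t = 0)
    (hM : ∀ N : Submodule S M, ∃ I : Ideal S, N = I • (⊤ : Submodule S M))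
    (hne : ∀ p : Ideal S, p.IsMaximal → p • (⊤ : Submodule S M) ≠ ⊤)
    (I J : Ideal S) (hIJ : I • (⊤ : Submodule S M) ≤ J • (⊤ : Submodule S M)) :
    I ≤ J := by
  intro a ha
  by_contra haJ
  -- the colon ideal K = {s | s * a ∈ J}
  set K : Ideal S :=
    { carrier := {s | s * a ∈ J}
      add_mem' := by intro u v hu hv; simpa [add_mul] using J.add_mem hu hv
      zero_mem' := by simp
      smul_mem' := by
        intro c s hs
        simp only [Set.mem_setOf_eq, smul_eq_mul, mul_assoc]
        exact J.mul_mem_left c hs } with hKdef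
  have hK : K ≠ ⊤ := by
    intro h
    have h1 : (1 : S) * a ∈ J := (Ideal.eq_top_iff_one K).mp h
    rw [one_mul] at h1
    exact haJ h1
  obtain ⟨p, hp, hKp⟩ := Ideal.exists_le_maximal K hK
  -- x ∉ pM
  have : ¬ ∀ x : M, x ∈ p • (⊤ : Submodule S M) := by
    intro h; exact hne p hp (Submodule.eq_top_iff'.mpr h)
  push_neg at this
  obtain ⟨x, hx⟩ := this
  obtain ⟨A, hA⟩ := hM (Submodule.span S {x})
  have hAp : ¬ A ≤ p := by
    intro h
    exact hx ((le_trans (le_of_eq hA) (Submodule.smul_mono_left h))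
      (Submodule.mem_span_singleton_self x))
  obtain ⟨q, hqA, hqp⟩ := SetLike.not_le_iff_exists.mp hAp
  -- q • m ∈ span {x} for all m
  have hqM : ∀ m : M, ∃ s : S, q • m = s • x := by
    intro m
    have : q • m ∈ Submodule.span S {x} := by
      rw [hA]; exact Submodule.smul_mem_smul hqA Submodule.mem_top
    obtain ⟨s, hs⟩ := Submodule.mem_span_singleton.mp this
    exact ⟨s, hs.symm⟩
  -- a • m ∈ J • ⊤
  have haM : a • (q • x) ∈ J • (⊤ : Submodule S M) :=
    hIJ (Submodule.smul_mem_smul ha Submodule.mem_top)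
  -- q • z is of form j • x for z ∈ J • ⊤
  have key : ∀ z ∈ J • (⊤ : Submodule S M), ∃ j ∈ J, q • z = j • x := by
    intro z hz
    refine Submodule.smul_induction_on hz ?_ ?_
    · intro r hr n _
      obtain ⟨s, hs⟩ := hqM n
      refine ⟨r * s, J.mul_mem_right s hr, ?_⟩
      rw [smul_comm q r n, hs, smul_smul]
    · rintro y z ⟨j1, hj1, h1⟩ ⟨j2, hj2, h2⟩
      exact ⟨j1 + j2, J.add_mem hj1 hj2, by rw [smul_add, h1, h2, add_smul]⟩
  obtain ⟨j, hjJ, hjx⟩ := key _ haM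
  have hcx : (q * (a * q)) • x = j • x := by
    rw [← hjx, smul_smul, smul_smul, mul_assoc]
  set c := q * (a * q) with hc
  obtain ⟨t, ht⟩ := hyoked c j
  have htx : t • x = 0 := by
    rcases ht with h | h
    · apply hcanc (c • x)
      rw [← add_smul, h, hcx, add_zero]
    · apply hcanc (j • x)
      rw [← add_smul, h, hcx, add_zero]
  have htq : t * q = 0 := by
    apply hfaith
    intro m
    obtain ⟨s, hs⟩ := hqM m
    rw [mul_smul, hs, smul_comm, htx, smul_zero]
  have hcq : c * q ∈ J := by
    rcases ht with h | h
    · have : c * q + t * q = j * q := by rw [← add_mul, h]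
      rw [htq, add_zero] at this
      rw [this]; exact J.mul_mem_right q hjJ
    · have : j * q + t * q = c * q := by rw [← add_mul, h]
      rw [htq, add_zero] at this
      rw [← this]; exact J.mul_mem_right q hjJ
  have hq3 : q * q * q ∈ K := by
    show q * q * q * a ∈ J
    have : q * q * q * a = c * q := by ring
    rw [this]; exact hcq
  have hq3p : q * q * q ∈ p := hKp hq3
  have hqprime := hp.isPrime
  rcases hqprime.mul_mem_iff_mem_or_mem.mp hq3p with h | h
  · rcases hqprime.mul_mem_iff_mem_or_mem.mp h with h' | h' <;> exact hqp h'
  · exact hqp h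
end

section
/- Let S be a yoked commutative semiring whose maximal ideals are subtractive, M a cancellative faithful multiplication S-semimodule, and p a prime ideal of S. If a ∈ S and x ∈ M satisfy ax ∈ pM, then a ∈ p or x ∈ pM. -/
/-- Over a yoked semiring with subtractive maximal ideals, for a cancellative
faithful multiplication semimodule M and a prime ideal p:
ax ∈ pM implies a ∈ p or x ∈ pM. -/
theorem mem_prime_or_mem_smul_of_yoked {S M : Type*} [CommSemiring S]
    [AddCommMonoid M] [Module S M]
    (hyoked : ∀ a b : S, ∃ t : S, a + t = b ∨ b + t = a)
    (hsub : ∀ q : Ideal S, q.IsMaximal → ∀ a b : S, a + b ∈ q → b ∈ q → a ∈ q)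
    (hcanc : ∀ m m1 m2 : M, m + m1 = m + m2 → m1 = m2)
    (hfaith : ∀ t : S, (∀ x : M, t • x = 0) → t = 0)
    (hM : ∀ N : Submodule S M, ∃ I : Ideal S, N = I • (⊤ : Submodule S M))
    (p : Ideal S) (hp : p.IsPrime) (a : S) (x : M)
    (hax : a • x ∈ p • (⊤ : Submodule S M)) :
    a ∈ p ∨ x ∈ p • (⊤ : Submodule S M) := by
  by_cases hxp : x ∈ p • (⊤ : Submodule S M)
  · exact Or.inr hxp
  by_cases hap : a ∈ p
  · exact Or.inl hap
  exfalso
  set P : Submodule S M := p • (⊤ : Submodule S M) with hP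
  -- The ideal K = (P : x)
  let K : Ideal S :=
    { carrier := {u | u • x ∈ P}
      add_mem' := fun {u v} hu hv => by
        simpa [add_smul] using P.add_mem hu hv
      zero_mem' := by simp
      smul_mem' := fun c u hu => by
        simpa [smul_eq_mul, mul_smul] using P.smul_mem c hu }
  have hKmem : ∀ u : S, u ∈ K ↔ u • x ∈ P := fun u => Iff.rfl
  have hKne : K ≠ ⊤ := by
    intro h
    apply hxp
    have h1 : (1 : S) ∈ K := h ▸ Submodule.mem_top
    simpa using (hKmem 1).1 h1
  obtain ⟨q, hq, hKq⟩ := Ideal.exists_le_maximal K hKne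
  have hqprime : q.IsPrime := hq.isPrime
  -- elements of J • span{w} all have the form d • w with d ∈ J
  have hform : ∀ (J : Ideal S) (w n : M), n ∈ J • Submodule.span S {w} →
      ∃ d ∈ J, d • w = n := by
    intro J w n hn
    refine Submodule.smul_induction_on hn ?_ ?_
    · intro r hr m hm
      obtain ⟨c, rfl⟩ := Submodule.mem_span_singleton.1 hm
      exact ⟨r * c, J.mul_mem_right c hr, by rw [mul_smul]⟩
    · rintro n1 n2 ⟨d1, hd1, rfl⟩ ⟨d2, hd2, rfl⟩
      exact ⟨d1 + d2, J.add_mem hd1 hd2, by rw [add_smul]⟩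
  by_cases hcyc : ∃ (w : M) (s : S), s ∉ q ∧ ∀ m : M, s • m ∈ Submodule.span S {w}
  · -- q-cyclic case
    obtain ⟨w, s, hs, hsw⟩ := hcyc
    obtain ⟨c, hc⟩ := Submodule.mem_span_singleton.1 (hsw x)
    -- s • (a • x) ∈ p • span{w}
    have h1 : s • (a • x) ∈ p • Submodule.span S {w} := by
      have hmap : P.map (LinearMap.lsmul S M s) ≤ p • Submodule.span S {w} := by
        rw [hP, Submodule.map_smul'']
        refine Submodule.smul_mono le_rfl ?_
        rw [Submodule.map_top]
        rintro _ ⟨m, rfl⟩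
        exact hsw m
      exact hmap (Submodule.mem_map_of_mem hax)
    obtain ⟨d, hd, hdw⟩ := hform p w _ h1
    have hacw : (a * c) • w = d • w := by
      rw [hdw, mul_smul, hc]; exact smul_comm a s x
    obtain ⟨t, ht⟩ := hyoked (a * c) d
    have htw : t • w = 0 := by
      rcases ht with ht | ht
      · -- a*c + t = d
        apply hcanc ((a * c) • w) (t • w) 0
        rw [add_zero, ← add_smul, ht, ← hacw]
      · -- d + t = a*c
        apply hcanc (d • w) (t • w) 0
        rw [add_zero, ← add_smul, ht, hacw]
    have hts : t * s = 0 := by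
      apply hfaith
      intro m
      obtain ⟨e, he⟩ := Submodule.mem_span_singleton.1 (hsw m)
      rw [mul_smul, ← he, smul_smul, mul_comm t e, mul_smul, htw, smul_zero]
    have hsac : s * (a * c) ∈ p := by
      have hsd : s * d ∈ p := p.mul_mem_left s hd
      rcases ht with ht | ht
      · -- a*c + t = d : s*(a*c) + s*t = s*d, s*t = 0
        have : s * (a * c) = s * d := by
          rw [← ht, mul_add, mul_comm s t, hts, add_zero]
        rwa [this]
      · -- d + t = a*c : s*(a*c) = s*d + s*t = s*d
        have : s * (a * c) = s * d := by
          rw [← ht, mul_add, mul_comm s t, hts, add_zero]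
        rwa [this]
    have hsc : s * c ∈ p := by
      have : a * (s * c) ∈ p := by rwa [show a * (s * c) = s * (a * c) by ring]
      rcases hp.mem_or_mem this with h | h
      · exact absurd h hap
      · exact h
    have hss : s * s ∈ K := by
      rw [hKmem, mul_smul, ← hc, smul_smul, hP]
      exact Submodule.smul_mem_smul hsc Submodule.mem_top
    rcases hqprime.mem_or_mem (hKq hss) with h | h <;> exact hs h
  · -- no q-cyclic element : then ⊤ = q • ⊤
    have hIq : ∀ (m : M) (I : Ideal S), Submodule.span S {m} = I • ⊤ → I ≤ q := by
      intro m I hI u hu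
      by_contra huq
      apply hcyc
      refine ⟨m, u, huq, fun m' => ?_⟩
      rw [hI]
      exact Submodule.smul_mem_smul hu Submodule.mem_top
    have htop : (⊤ : Submodule S M) = q • ⊤ := by
      refine le_antisymm ?_ le_top
      intro m _
      obtain ⟨I, hI⟩ := hM (Submodule.span S {m})
      have hm : m ∈ I • (⊤ : Submodule S M) := hI ▸ Submodule.mem_span_singleton_self m
      exact Submodule.smul_mono (hIq m I hI) le_rfl hm
    obtain ⟨I, hI⟩ := hM (Submodule.span S {x})
    have hqx : Submodule.span S {x} = q • Submodule.span S {x} := by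
      conv_lhs => rw [hI, htop, ← Submodule.smul_assoc, smul_eq_mul, mul_comm,
        ← smul_eq_mul, Submodule.smul_assoc, ← hI]
    obtain ⟨u, huq, hux⟩ := hform q x x (hqx ▸ Submodule.mem_span_singleton_self x)
    obtain ⟨t, ht⟩ := hyoked 1 u
    have htx : t • x = 0 := by
      rcases ht with ht | ht
      · -- 1 + t = u : x = u•x = x + t•x
        apply hcanc x (t • x) 0
        rw [add_zero]
        calc x + t • x = (1 + t) • x := by rw [add_smul, one_smul]
          _ = u • x := by rw [ht]
          _ = x := hux
      · -- u + t = 1 : x = u•x + t•x = x + t•x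
        apply hcanc x (t • x) 0
        rw [add_zero]
        calc x + t • x = u • x + t • x := by rw [hux]
          _ = (u + t) • x := by rw [add_smul]
          _ = x := by rw [ht, one_smul]
    have htK : t ∈ q := hKq (by rw [hKmem, htx]; exact P.zero_mem)
    have h1q : (1 : S) ∈ q := by
      rcases ht with ht | ht
      · exact hsub q hq 1 t (by rw [ht]; exact huq) htK
      · rw [← ht]; exact q.add_mem huq htK
    exact hq.ne_top (q.eq_top_of_isUnit_mem h1q isUnit_one)
end
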